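/- Let h₁ solve the boundary value problem (1/2)h₁''(x) - ωx h₁'(x) = -1 on (ℓ,u) with h₁(ℓ) = h₁(u) = 0. Then the general solution of the ODE is h₁(x) = c₁ erfi(√ω x) - x² F(ωx²) + c₂, where F(t) = ₂F₂(1,1; 3/2,2; t), i.e., the function x ↦ x²F(ωx²) is a particular solution: (1/2)(x²F(ωx²))'' - ωx(x²F(ωx²))' = 1. -/

import Mathlib

open MeasureTheory Real

/-- The imaginary error function `erfi(z) = (2/√π) ∫_0^z e^{t²} dt`. -/
noncomputable def erfi (z : ℝ) : ℝ :=
  (2 / Real.sqrt Real.pi) * ∫ t in (0 : ℝ)..z, Real.exp (t ^ 2)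

/-- The generalized hypergeometric function `₂F₂(1,1; 3/2,2; t)`, whose series
`Σₖ ((1)ₖ(1)ₖ)/((3/2)ₖ(2)ₖ) tᵏ/k!` simplifies to `Σₖ tᵏ/((3/2)ₖ (k+1))`. -/
noncomputable def F22 (t : ℝ) : ℝ :=
  ∑' k : ℕ, t ^ k / (((ascPochhammer ℝ k).eval (3 / 2 : ℝ)) * (k + 1))

namespace HypAux

open FormalMultilinearSeries Nat

/-- Sum of a real power series with coefficients `c`. -/
noncomputable def pser (c : ℕ → ℝ) (t : ℝ) : ℝ := ∑' k : ℕ, c k * t ^ k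

/-- Coefficients of the termwise derivative. -/
noncomputable def dcoef (c : ℕ → ℝ) (k : ℕ) : ℝ := ((k : ℝ) + 1) * c (k + 1)

/-- Coefficients bounded by `1/k!`. -/
def Bdd (c : ℕ → ℝ) : Prop := ∀ k, |c k| ≤ ((k ! : ℝ))⁻¹

lemma Bdd.dcoef {c : ℕ → ℝ} (hc : Bdd c) : Bdd (HypAux.dcoef c) := by
  intro k
  have h := hc (k + 1)
  have habs : |HypAux.dcoef c k| = ((k : ℝ) + 1) * |c (k + 1)| := by
    rw [HypAux.dcoef, abs_mul, abs_of_nonneg (by positivity)]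
  rw [habs]
  have hfac : ((k + 1)! : ℝ) = ((k : ℝ) + 1) * (k ! : ℝ) := by
    rw [Nat.factorial_succ]; push_cast; ring
  calc ((k : ℝ) + 1) * |c (k + 1)| ≤ ((k : ℝ) + 1) * ((k + 1)! : ℝ)⁻¹ := by gcongr
    _ = (k ! : ℝ)⁻¹ := by
        rw [hfac, mul_inv]
        have : ((k : ℝ) + 1) ≠ 0 := by positivity
        field_simp

lemma radius_top {c : ℕ → ℝ} (hc : Bdd c) : (ofScalars ℝ c).radius = ⊤ := by
  apply FormalMultilinearSeries.radius_eq_top_of_summable_norm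
  intro r
  refine Summable.of_nonneg_of_le (fun n => ?_) (fun n => ?_)
    (Real.summable_pow_div_factorial r)
  · exact mul_nonneg (norm_nonneg _) (pow_nonneg r.coe_nonneg n)
  · rw [FormalMultilinearSeries.ofScalars_norm]
    calc ‖c n‖ * (r : ℝ) ^ n ≤ (n ! : ℝ)⁻¹ * (r : ℝ) ^ n :=
          mul_le_mul_of_nonneg_right (by simpa [Real.norm_eq_abs] using hc n)
            (pow_nonneg r.coe_nonneg n)
      _ = (r : ℝ) ^ n / (n !) := by ring

lemma summable_pser {c : ℕ → ℝ} (hc : Bdd c) (t : ℝ) :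
    Summable (fun k => c k * t ^ k) := by
  refine Summable.of_norm_bounded (Real.summable_pow_div_factorial |t|) (fun k => ?_)
  rw [norm_mul, norm_pow, Real.norm_eq_abs, Real.norm_eq_abs]
  calc |c k| * |t| ^ k ≤ (k ! : ℝ)⁻¹ * |t| ^ k :=
        mul_le_mul_of_nonneg_right (hc k) (pow_nonneg (abs_nonneg t) k)
    _ = |t| ^ k / (k !) := by ring

lemma hasSum_pser {c : ℕ → ℝ} (hc : Bdd c) (t : ℝ) :
    HasSum (fun k => c k * t ^ k) (pser c t) :=
  (summable_pser hc t).hasSum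

lemma pser_eq_sum (c : ℕ → ℝ) : pser c = (ofScalars ℝ c).sum := by
  funext t
  rw [pser, FormalMultilinearSeries.sum]
  exact tsum_congr fun k => by
    rw [FormalMultilinearSeries.ofScalars_apply_eq, smul_eq_mul]

lemma hasSum_shift {c : ℕ → ℝ} (hc : Bdd c) (t : ℝ) :
    HasSum (fun k => c (k + 1) * t ^ (k + 1)) (pser c t - c 0) := by
  refine (hasSum_nat_add_iff (f := fun k => c k * t ^ k) 1).mpr ?_
  simpa using hasSum_pser hc t

lemma hasDerivAt_pser {c : ℕ → ℝ} (hc : Bdd c) (t : ℝ) :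
    HasDerivAt (pser c) (pser (dcoef c) t) t := by
  set p := ofScalars ℝ c with hp
  have hball : HasFPowerSeriesOnBall (pser c) p 0 ⊤ := by
    have h := p.hasFPowerSeriesOnBall (by rw [radius_top hc]; exact ENNReal.zero_lt_top)
    rw [radius_top hc] at h
    rwa [← pser_eq_sum] at h
  rcases eq_or_ne t 0 with rfl | ht
  · have h0 : HasDerivAt (pser c) (p 1 fun _ => (1 : ℝ)) 0 :=
      hball.hasFPowerSeriesAt.hasDerivAt
    convert h0 using 1
    rw [hp, FormalMultilinearSeries.ofScalars_apply_eq, smul_eq_mul, one_pow, mul_one]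
    rw [pser, tsum_eq_single 0 (fun k hk => by simp [zero_pow hk])]
    simp [dcoef]
  · have hd := hball.hasFDerivAt (y := t) ENNReal.coe_lt_top
    rw [zero_add] at hd
    have hw : HasFPowerSeriesWithinOnBall (pser c) p Set.univ 0 ⊤ :=
      hball.hasFPowerSeriesWithinOnBall
    have hu : UniqueDiffOn ℝ (insert (0 : ℝ) Set.univ) := by
      rw [Set.insert_eq_self.mpr (Set.mem_univ 0)]; exact uniqueDiffOn_univ
    have hsum := hw.hasSum_derivSeries_of_hasFDerivWithinAt (y := t)
      ENNReal.coe_lt_top (by simp)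
      (by rw [zero_add]; exact hd.hasFDerivWithinAt) hu
    have hsum1 := hsum.mapL (ContinuousLinearMap.apply ℝ ℝ (1 : ℝ))
    have hterm : ∀ n : ℕ, (p.derivSeries n fun _ => t) (1 : ℝ) = dcoef c n * t ^ n := by
      intro n
      set M := p.derivSeries n fun _ => t with hM
      have h1 : M t = ((n : ℝ) + 1) * (c (n + 1) * t ^ (n + 1)) := by
        rw [hM, p.derivSeries_apply_diag, hp, FormalMultilinearSeries.ofScalars_apply_eq,
          smul_eq_mul, nsmul_eq_mul]
        push_cast; ring
      have h2 : M t = t * M 1 := by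
        have := M.map_smul t 1
        simpa [smul_eq_mul] using this
      apply mul_left_cancel₀ ht
      rw [← h2, h1, dcoef]
      ring
    have hsum2 : HasSum (fun n => dcoef c n * t ^ n)
        ((continuousMultilinearCurryFin1 ℝ ℝ ℝ (p.changeOrigin t 1)) 1) := by
      simp only [ContinuousLinearMap.apply_apply] at hsum1
      rwa [funext hterm] at hsum1
    show HasDerivAt (pser c) (∑' k, dcoef c k * t ^ k) t
    rw [hsum2.tsum_eq]
    exact hd.hasDerivAt

/-- `q k = (3/2)ₖ`. -/
noncomputable def q (k : ℕ) : ℝ := (ascPochhammer ℝ k).eval (3 / 2 : ℝ)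

lemma q_zero : q 0 = 1 := by simp [q]

lemma q_succ (k : ℕ) : q (k + 1) = q k * (3 / 2 + k) := by
  rw [q, q, ascPochhammer_succ_right]
  simp [Polynomial.eval_mul]

lemma q_pos : ∀ k, 0 < q k := by
  intro k
  induction k with
  | zero => rw [q_zero]; norm_num
  | succ n ih =>
      rw [q_succ]
      exact mul_pos ih (by positivity)

lemma q_ge (k : ℕ) : (k ! : ℝ) ≤ q k := by
  induction k with
  | zero => rw [q_zero]; simp
  | succ n ih =>
      rw [q_succ]
      have h1 : ((n + 1)! : ℝ) = (n ! : ℝ) * ((n : ℝ) + 1) := by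
        rw [Nat.factorial_succ]; push_cast; ring
      rw [h1]
      have h2 : ((n : ℝ) + 1) ≤ 3 / 2 + n := by linarith
      exact mul_le_mul ih h2 (by positivity) (q_pos n).le

/-- Coefficients of `F22`. -/
noncomputable def bb (k : ℕ) : ℝ := 1 / (q k * ((k : ℝ) + 1))

/-- Coefficients of `₁F₁(1;3/2;·)`. -/
noncomputable def φφ (k : ℕ) : ℝ := 1 / q k

lemma bdd_bb : Bdd bb := by
  intro k
  have hq := q_pos k
  have h1 : (0 : ℝ) < q k * ((k : ℝ) + 1) := mul_pos hq (by positivity)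
  rw [bb, abs_of_pos (one_div_pos.mpr h1), ← one_div]
  refine one_div_le_one_div_of_le (by positivity) ?_
  calc (k ! : ℝ) ≤ q k := q_ge k
    _ ≤ q k * ((k : ℝ) + 1) := le_mul_of_one_le_right hq.le (by have : (0:ℝ) ≤ (k:ℝ) := Nat.cast_nonneg k; linarith)

lemma bdd_φφ : Bdd φφ := by
  intro k
  have hq := q_pos k
  rw [φφ, abs_of_pos (one_div_pos.mpr hq), ← one_div]
  exact one_div_le_one_div_of_le (by positivity) (q_ge k)

lemma F22_eq : F22 = pser bb := by
  funext t
  rw [F22, pser]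
  refine tsum_congr fun k => ?_
  rw [bb, one_div_mul_eq_div]
  rfl

lemma bb_zero : bb 0 = 1 := by rw [bb, q_zero]; norm_num

lemma φφ_zero : φφ 0 = 1 := by rw [φφ, q_zero]; norm_num

lemma φφ_rec (k : ℕ) : 2 * φφ k = (2 * (k : ℝ) + 3) * φφ (k + 1) := by
  have hq := (q_pos k).ne'
  rw [φφ, φφ, q_succ]
  field_simp
  ring

lemma φφ_bb (k : ℕ) : φφ (k + 1) = ((k : ℝ) + 2) * bb (k + 1) := by
  have hq := (q_pos (k + 1)).ne'
  rw [φφ, bb]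
  push_cast
  field_simp
  ring

/-- Identity A: `F + t F' · t = Φ`, i.e. `pser bb t + t * pser (dcoef bb) t = pser φφ t`. -/
lemma identity_A (t : ℝ) : pser bb t + t * pser (dcoef bb) t = pser φφ t := by
  have hFs := hasSum_shift bdd_bb t
  have hφs := hasSum_shift bdd_φφ t
  have hD := (hasSum_pser bdd_bb.dcoef t).mul_left t
  have hcomb := hFs.add hD
  have hkey : (fun k : ℕ => bb (k + 1) * t ^ (k + 1) + t * (dcoef bb k * t ^ k))
      = fun k : ℕ => φφ (k + 1) * t ^ (k + 1) := by
    funext k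
    rw [dcoef, φφ_bb, pow_succ]
    ring
  rw [hkey] at hcomb
  have := hφs.unique hcomb
  rw [bb_zero, φφ_zero] at this
  linarith

/-- Identity B: `Φ + 2tΦ' - 2tΦ = 1`. -/
lemma identity_B (t : ℝ) :
    pser φφ t + 2 * t * pser (dcoef φφ) t - 2 * t * pser φφ t = 1 := by
  have hφ := hasSum_pser bdd_φφ t
  have hφs := hasSum_shift bdd_φφ t
  have hT := hφ.sub hφs
  have hC := hφ.add (((hasSum_pser bdd_φφ.dcoef t).mul_left (2 * t)).sub
    (hφ.mul_left (2 * t)))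
  have hkey : (fun k : ℕ => φφ k * t ^ k +
      (2 * t * (dcoef φφ k * t ^ k) - 2 * t * (φφ k * t ^ k)))
      = fun k : ℕ => φφ k * t ^ k - φφ (k + 1) * t ^ (k + 1) := by
    funext k
    have hrec := φφ_rec k
    rw [dcoef]
    linear_combination (-(t ^ k * t)) * hrec
  rw [hkey] at hC
  have := hT.unique hC
  rw [φφ_zero] at this
  linarith

end HypAux

open HypAux

/-- The general solution of `(1/2)h'' - ωx h' = -1` is
`h(x) = c₁ erfi(√ω x) - x²F(ωx²) + c₂` with `F = ₂F₂(1,1;3/2,2;·)`; that is,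
`x ↦ x²F(ωx²)` is a particular solution with `(1/2)(x²F(ωx²))'' - ωx(x²F(ωx²))' = 1`. -/
theorem hypergeometric_particular_solution (ωc : ℝ) (hω : 0 < ωc) :
    (∀ x : ℝ,
      (1 / 2) * deriv (deriv fun y : ℝ => y ^ 2 * F22 (ωc * y ^ 2)) x -
        ωc * x * deriv (fun y : ℝ => y ^ 2 * F22 (ωc * y ^ 2)) x = 1) ∧
    (∀ c₁ c₂ : ℝ, ∀ x : ℝ,
      (1 / 2) * deriv (deriv fun y : ℝ =>
          c₁ * erfi (Real.sqrt ωc * y) - y ^ 2 * F22 (ωc * y ^ 2) + c₂) x -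
        ωc * x * deriv (fun y : ℝ =>
          c₁ * erfi (Real.sqrt ωc * y) - y ^ 2 * F22 (ωc * y ^ 2) + c₂) x = -1) := by
  have hin : ∀ x : ℝ, HasDerivAt (fun y : ℝ => ωc * y ^ 2) (ωc * (2 * x)) x := by
    intro x
    simpa using (hasDerivAt_pow 2 x).const_mul ωc
  -- derivative of the particular solution part
  have hd1 : ∀ x : ℝ, HasDerivAt (fun y : ℝ => y ^ 2 * pser bb (ωc * y ^ 2))
      (2 * x * pser φφ (ωc * x ^ 2)) x := by
    intro x
    have hsq : HasDerivAt (fun y : ℝ => y ^ 2) (2 * x) x := by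
      simpa using hasDerivAt_pow 2 x
    have hFc : HasDerivAt (fun y : ℝ => pser bb (ωc * y ^ 2))
        (pser (dcoef bb) (ωc * x ^ 2) * (ωc * (2 * x))) x :=
      by have := (hasDerivAt_pser bdd_bb (ωc * x ^ 2)).comp x (hin x); exact this
    have hmul := hsq.mul hFc
    refine hmul.congr_deriv (Eq.symm ?_)
    have hA := identity_A (ωc * x ^ 2)
    linear_combination (-2 * x) * hA
  have hderiv1 : deriv (fun y : ℝ => y ^ 2 * pser bb (ωc * y ^ 2))
      = fun x : ℝ => 2 * x * pser φφ (ωc * x ^ 2) :=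
    funext fun x => (hd1 x).deriv
  -- second derivative of the particular solution part
  have hd2 : ∀ x : ℝ, HasDerivAt (fun x : ℝ => 2 * x * pser φφ (ωc * x ^ 2))
      (2 * pser φφ (ωc * x ^ 2) +
        2 * x * (pser (dcoef φφ) (ωc * x ^ 2) * (ωc * (2 * x)))) x := by
    intro x
    have hlin : HasDerivAt (fun y : ℝ => 2 * y) (2 : ℝ) x := by
      simpa using (hasDerivAt_id x).const_mul (2 : ℝ)
    have hΦc : HasDerivAt (fun y : ℝ => pser φφ (ωc * y ^ 2))
        (pser (dcoef φφ) (ωc * x ^ 2) * (ωc * (2 * x))) x :=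
      by have := (hasDerivAt_pser bdd_φφ (ωc * x ^ 2)).comp x (hin x); exact this
    exact hlin.mul hΦc
  constructor
  · intro x
    simp only [F22_eq]
    rw [hderiv1, (hd2 x).deriv]
    have hB := identity_B (ωc * x ^ 2)
    linear_combination hB
  · intro c₁ c₂ x
    simp only [F22_eq]
    -- derivative of erfi
    have herfi : ∀ z : ℝ, HasDerivAt erfi (2 / Real.sqrt Real.pi * Real.exp (z ^ 2)) z := by
      intro z
      have hc : Continuous fun t : ℝ => Real.exp (t ^ 2) := by continuity
      have hint : HasDerivAt (fun u : ℝ => ∫ t in (0 : ℝ)..u, Real.exp (t ^ 2))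
          (Real.exp (z ^ 2)) z :=
        intervalIntegral.integral_hasDerivAt_right (hc.intervalIntegrable _ _)
          (hc.aestronglyMeasurable.stronglyMeasurableAtFilter) hc.continuousAt
      exact hint.const_mul (2 / Real.sqrt Real.pi)
    have hsqx : ∀ x : ℝ, (Real.sqrt ωc * x) ^ 2 = ωc * x ^ 2 := by
      intro x
      rw [mul_pow, Real.sq_sqrt hω.le]
    have hE : ∀ x : ℝ, HasDerivAt (fun y : ℝ => c₁ * erfi (Real.sqrt ωc * y))
        (c₁ * (2 / Real.sqrt Real.pi * Real.exp (ωc * x ^ 2) * Real.sqrt ωc)) x := by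
      intro x
      have hlin : HasDerivAt (fun y : ℝ => Real.sqrt ωc * y) (Real.sqrt ωc) x := by
        simpa using (hasDerivAt_id x).const_mul (Real.sqrt ωc)
      have hcomp := (herfi (Real.sqrt ωc * x)).comp x hlin
      rw [hsqx x] at hcomp
      exact hcomp.const_mul c₁
    -- full function derivative
    set K := c₁ * (2 / Real.sqrt Real.pi) * Real.sqrt ωc with hK
    have hH : ∀ x : ℝ, HasDerivAt (fun y : ℝ =>
        c₁ * erfi (Real.sqrt ωc * y) - y ^ 2 * pser bb (ωc * y ^ 2) + c₂)
        (K * Real.exp (ωc * x ^ 2) - 2 * x * pser φφ (ωc * x ^ 2)) x := by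
      intro x
      have := ((hE x).sub (hd1 x)).add_const c₂
      refine this.congr_deriv (Eq.symm ?_)
      rw [hK]; ring
    have hderivH : deriv (fun y : ℝ =>
        c₁ * erfi (Real.sqrt ωc * y) - y ^ 2 * pser bb (ωc * y ^ 2) + c₂)
        = fun x : ℝ => K * Real.exp (ωc * x ^ 2) - 2 * x * pser φφ (ωc * x ^ 2) :=
      funext fun x => (hH x).deriv
    have hH2 : ∀ x : ℝ, HasDerivAt
        (fun x : ℝ => K * Real.exp (ωc * x ^ 2) - 2 * x * pser φφ (ωc * x ^ 2))
        (K * (Real.exp (ωc * x ^ 2) * (ωc * (2 * x))) -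
          (2 * pser φφ (ωc * x ^ 2) +
            2 * x * (pser (dcoef φφ) (ωc * x ^ 2) * (ωc * (2 * x))))) x := by
      intro x
      have hexp : HasDerivAt (fun y : ℝ => Real.exp (ωc * y ^ 2))
          (Real.exp (ωc * x ^ 2) * (ωc * (2 * x))) x :=
        by have := (Real.hasDerivAt_exp (ωc * x ^ 2)).comp x (hin x); exact this
      exact (hexp.const_mul K).sub (hd2 x)
    rw [hderivH, (hH2 x).deriv]
    have hB := identity_B (ωc * x ^ 2)
    linear_combination (-1 : ℝ) * hB
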